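/- Let A ∈ M₃⊗M₃ be separable. Then the linear span of P[A] and the linear span of Q[A] both equal the range of A. -/

import Mathlib

open Matrix BigOperators
open scoped ComplexOrder

/-- Index set for `M₃ ⊗ M₃ ≅ M₉`: pairs `(i,k)` with `i,k ∈ Fin 3`. -/
abbrev Idx : Type := Fin 3 × Fin 3

/-- `M₃ ⊗ M₃`, identified with 9×9 complex matrices. -/
abbrev M9 : Type := Matrix Idx Idx ℂ

/-- Vectors in `ℂ³ ⊗ ℂ³ ≅ ℂ⁹`. -/
abbrev V9 : Type := Idx → ℂ

/-- The product vector `x ⊗ y`, with entries `(x⊗y)(i,k) = x i * y k`. -/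
def prodVec (x y : Fin 3 → ℂ) : V9 := fun p => x p.1 * y p.2

/-- Entrywise complex conjugate of a vector in `ℂ³`. -/
def conjVec (x : Fin 3 → ℂ) : Fin 3 → ℂ := fun i => (starRingEnd ℂ) (x i)

/-- The rank-one matrix `z z*`. -/
def rankOne (z : V9) : M9 := Matrix.vecMulVec z (fun p => (starRingEnd ℂ) (z p))

/-- The partial transpose: `A^Γ((i,k),(j,l)) = A((j,k),(i,l))`. -/
def ptrans (A : M9) : M9 := fun p q => A (q.1, p.2) (p.1, q.2)

/-- The range of a matrix `A`, as a subspace of `ℂ⁹`. -/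
noncomputable def MatRange (A : M9) : Submodule ℂ V9 := LinearMap.range A.mulVecLin

/-- `A` is separable: a finite sum of `(x⊗y)(x⊗y)*` over product vectors. -/
def IsSep (A : M9) : Prop :=
  ∃ (n : ℕ) (x y : Fin n → Fin 3 → ℂ),
    A = ∑ ι : Fin n, rankOne (prodVec (x ι) (y ι))

/-- The convex cone `V₁` of all separable matrices. -/
def V1 : Set M9 := {A | IsSep A}

/-- `A` is PPT: both `A` and `A^Γ` are positive semidefinite. -/
def IsPPT (A : M9) : Prop := A.PosSemidef ∧ (ptrans A).PosSemidef

/-- The convex cone `𝕋` of all PPT matrices. -/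
def Tcone : Set M9 := {A | IsPPT A}

/-- `F` is a face of the convex set `C`. -/
def IsFaceOf (F C : Set M9) : Prop :=
  F ⊆ C ∧ Convex ℝ F ∧
    ∀ x ∈ C, ∀ y ∈ C, ∀ t : ℝ, 0 < t → t < 1 →
      (1 - t) • x + t • y ∈ F → x ∈ F ∧ y ∈ F

/-- The smallest face of `C` containing `A`. -/
def smallestFace (C : Set M9) (A : M9) : Set M9 := ⋂₀ {F | IsFaceOf F C ∧ A ∈ F}

/-- `P[A]`: product vectors `z` with `z z* ∈ V₁[A]`. -/
def Pvecs (A : M9) : Set V9 :=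
  {z | (∃ x y : Fin 3 → ℂ, z = prodVec x y) ∧ rankOne z ∈ smallestFace V1 A}

/-- `Q[A]`: product vectors `x⊗y` with `x⊗y ∈ range A` and `x̄⊗y ∈ range A^Γ`. -/
def Qvecs (A : M9) : Set V9 :=
  {z | ∃ x y : Fin 3 → ℂ, z = prodVec x y ∧
    prodVec x y ∈ MatRange A ∧ prodVec (conjVec x) y ∈ MatRange (ptrans A)}

/-- The face `𝕋[A]` of the PPT cone determined by `A`. -/
def TFace (A : M9) : Set M9 :=
  {B | IsPPT B ∧ MatRange B ≤ MatRange A ∧ MatRange (ptrans B) ≤ MatRange (ptrans A)}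

/-- `x` is an interior point of the convex set `C`. -/
def IsInteriorPt (x : M9) (C : Set M9) : Prop :=
  x ∈ C ∧ ∀ y ∈ C, ∃ t : ℝ, 1 < t ∧ (1 - t) • y + t • x ∈ C

/-- The matrix `A[a,b,c]` of the paper. -/
def Amat (a b c : ℝ) : M9 := fun p q =>
  if p = q then
    (if p.1 = p.2 then (a : ℂ) else if p.2 = p.1 + 1 then (c : ℂ) else (b : ℂ))
  else if p.1 = p.2 ∧ q.1 = q.2 then 1 else 0

section AuxLemmas

-- auxiliary lemmas

lemma rankOne_mulVec (z v : V9) : (rankOne z) *ᵥ v = (star z ⬝ᵥ v) • z := by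
  funext p
  simp only [rankOne, Matrix.mulVec, Matrix.vecMulVec, dotProduct, Matrix.of_apply,
    Pi.smul_apply, smul_eq_mul, Pi.star_apply, starRingEnd_apply, Finset.sum_mul]
  exact Finset.sum_congr rfl fun q _ => by ring

lemma rankOne_posSemidef (z : V9) : (rankOne z).PosSemidef := by
  have h : rankOne z = Matrix.replicateCol Unit z * (Matrix.replicateCol Unit z)ᴴ := by
    rw [Matrix.conjTranspose_replicateCol, ← Matrix.vecMulVec_eq]
    rfl
  rw [h]
  exact Matrix.posSemidef_self_mul_conjTranspose _

lemma sum_mulVec' {n : ℕ} (M : Fin n → M9) (w : V9) :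
    (∑ ι, M ι) *ᵥ w = ∑ ι, (M ι) *ᵥ w := by
  funext p
  simp only [Matrix.mulVec, dotProduct, Matrix.sum_apply, Finset.sum_apply,
    Finset.sum_mul]
  exact Finset.sum_comm

lemma IsSep.posSemidef {A : M9} (h : IsSep A) : A.PosSemidef := by
  obtain ⟨n, x, y, rfl⟩ := h
  exact Finset.sum_induction _ _ (fun a b ha hb => ha.add hb) Matrix.PosSemidef.zero
    (fun i _ => rankOne_posSemidef _)

lemma prodVec_smul (c : ℂ) (x y : Fin 3 → ℂ) :
    prodVec (c • x) y = c • prodVec x y := by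
  funext p; simp [prodVec, mul_assoc]

lemma rankOne_smul (c : ℂ) (z : V9) :
    rankOne (c • z) = (c * star c) • rankOne z := by
  funext p q
  show (c * z p) * (starRingEnd ℂ) (c * z q) = (c * star c) * (z p * (starRingEnd ℂ) (z q))
  rw [_root_.map_mul, starRingEnd_apply]
  ring

lemma IsSep.rsmul {A : M9} (h : IsSep A) {t : ℝ} (ht : 0 ≤ t) : IsSep (t • A) := by
  obtain ⟨n, x, y, rfl⟩ := h
  refine ⟨n, fun ι => ((Real.sqrt t : ℂ)) • x ι, y, ?_⟩
  rw [Finset.smul_sum]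
  refine Finset.sum_congr rfl fun ι _ => ?_
  rw [prodVec_smul, rankOne_smul]
  have : ((Real.sqrt t : ℂ)) * star ((Real.sqrt t : ℂ)) = (t : ℂ) := by
    rw [Complex.star_def, Complex.conj_ofReal, ← Complex.ofReal_mul,
      Real.mul_self_sqrt ht]
  rw [this]
  funext p q
  simp [Matrix.smul_apply, Complex.real_smul]

lemma IsSep.add {A B : M9} (hA : IsSep A) (hB : IsSep B) : IsSep (A + B) := by
  obtain ⟨n, x, y, rfl⟩ := hA
  obtain ⟨m, x', y', rfl⟩ := hB
  refine ⟨n + m, Fin.append x x', Fin.append y y', ?_⟩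
  rw [Fin.sum_univ_add]
  congr 1
  · exact Finset.sum_congr rfl fun ι _ => by rw [Fin.append_left, Fin.append_left]
  · exact Finset.sum_congr rfl fun ι _ => by rw [Fin.append_right, Fin.append_right]

lemma isSep_zero : IsSep 0 := ⟨0, fun i => 0, fun i => 0, by simp⟩

lemma isSep_rankOne (x y : Fin 3 → ℂ) : IsSep (rankOne (prodVec x y)) :=
  ⟨1, fun _ => x, fun _ => y, by simp⟩

lemma matRange_sum_rankOne {n : ℕ} (v : Fin n → V9) :
    MatRange (∑ ι, rankOne (v ι)) = Submodule.span ℂ (Set.range v) := by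
  set V : Matrix Idx (Fin n) ℂ := Matrix.of fun p ι => v ι p with hV
  have hA : ∑ ι, rankOne (v ι) = V * Vᴴ := by
    funext p q
    simp only [Matrix.sum_apply, Matrix.mul_apply, rankOne, Matrix.vecMulVec,
      Matrix.of_apply, Matrix.conjTranspose_apply, hV, starRingEnd_apply]
  have h1 : LinearMap.range (V * Vᴴ).mulVecLin ≤ LinearMap.range V.mulVecLin := by
    rw [Matrix.mulVecLin_mul]
    exact LinearMap.range_comp_le_range _ _
  have h2 : LinearMap.range (V * Vᴴ).mulVecLin = LinearMap.range V.mulVecLin := by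
    refine Submodule.eq_of_le_of_finrank_le h1 ?_
    exact ge_of_eq (Matrix.rank_self_mul_conjTranspose V)
  have h3 : V.col = v := by funext ι p; rfl
  rw [MatRange, hA, h2, Matrix.range_mulVecLin, h3]

lemma ptrans_sum_rankOne {n : ℕ} (x y : Fin n → Fin 3 → ℂ) :
    ptrans (∑ ι, rankOne (prodVec (x ι) (y ι))) =
      ∑ ι, rankOne (prodVec (conjVec (x ι)) (y ι)) := by
  funext p q
  simp only [ptrans, Matrix.sum_apply]
  refine Finset.sum_congr rfl fun ι _ => ?_
  show x ι q.1 * y ι p.2 * (starRingEnd ℂ) (x ι p.1 * y ι q.2)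
      = conjVec (x ι) p.1 * y ι p.2 * (starRingEnd ℂ) (conjVec (x ι) q.1 * y ι q.2)
  simp only [conjVec, _root_.map_mul, Complex.conj_conj, RingHom.id_apply,
    RingHomCompTriple.comp_apply]
  ring

/-- The face of `V1` given by a kernel-inclusion condition. -/
def Fker (A : M9) : Set M9 := {B | IsSep B ∧ ∀ v : V9, A *ᵥ v = 0 → B *ᵥ v = 0}

lemma psd_pair_zero {a b : ℂ} {s t : ℝ} (ha : 0 ≤ a) (hb : 0 ≤ b)
    (hs : 0 < s) (ht : 0 < t) (h : s • a + t • b = 0) : a = 0 ∧ b = 0 := by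
  rw [Complex.real_smul, Complex.real_smul] at h
  have hsa : 0 ≤ (s : ℂ) * a := mul_nonneg (by exact_mod_cast hs.le) ha
  have htb : 0 ≤ (t : ℂ) * b := mul_nonneg (by exact_mod_cast ht.le) hb
  obtain ⟨h1, h2⟩ := (add_eq_zero_iff_of_nonneg hsa htb).mp h
  constructor
  · exact (mul_eq_zero.mp h1).resolve_left (by exact_mod_cast hs.ne')
  · exact (mul_eq_zero.mp h2).resolve_left (by exact_mod_cast ht.ne')

lemma Fker_isFace (A : M9) (hA : IsSep A) :
    IsFaceOf (Fker A) V1 ∧ A ∈ Fker A := by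
  refine ⟨⟨fun B hB => hB.1, ?_, ?_⟩, hA, fun v hv => hv⟩
  · -- convexity
    intro B hB C hC a b ha hb hab
    refine ⟨(hB.1.rsmul ha).add (hC.1.rsmul hb), fun v hv => ?_⟩
    rw [Matrix.add_mulVec, Matrix.smul_mulVec, Matrix.smul_mulVec,
      hB.2 v hv, hC.2 v hv, smul_zero, smul_zero, add_zero]
  · -- face condition
    intro B hB C hC t ht0 ht1 hmem
    have h1t : (0:ℝ) < 1 - t := by linarith
    have key : ∀ v : V9, A *ᵥ v = 0 → B *ᵥ v = 0 ∧ C *ᵥ v = 0 := by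
      intro v hv
      have hD := hmem.2 v hv
      have hdot : (1 - t) • (star v ⬝ᵥ B *ᵥ v) + t • (star v ⬝ᵥ C *ᵥ v) = 0 := by
        have : star v ⬝ᵥ (((1 - t) • B + t • C) *ᵥ v) = 0 := by rw [hD, dotProduct_zero]
        rw [Matrix.add_mulVec, Matrix.smul_mulVec, Matrix.smul_mulVec,
          dotProduct_add, dotProduct_smul, dotProduct_smul] at this
        exact this
      obtain ⟨e1, e2⟩ := psd_pair_zero (hB.posSemidef.dotProduct_mulVec_nonneg v) (hC.posSemidef.dotProduct_mulVec_nonneg v) h1t ht0 hdot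
      exact ⟨(hB.posSemidef.dotProduct_mulVec_zero_iff v).mp e1,
        (hC.posSemidef.dotProduct_mulVec_zero_iff v).mp e2⟩
    exact ⟨⟨hB, fun v hv => (key v hv).1⟩, ⟨hC, fun v hv => (key v hv).2⟩⟩

lemma isSep_sum_subset {n : ℕ} (x y : Fin n → Fin 3 → ℂ) (s : Finset (Fin n)) :
    IsSep (∑ ι ∈ s, rankOne (prodVec (x ι) (y ι))) :=
  Finset.sum_induction _ _ (fun a b ha hb => ha.add hb) isSep_zero
    (fun i _ => isSep_rankOne _ _)

lemma rankOne_mem_smallestFace {n : ℕ} (x y : Fin n → Fin 3 → ℂ) (j : Fin n) :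
    rankOne (prodVec (x j) (y j)) ∈
      smallestFace V1 (∑ ι : Fin n, rankOne (prodVec (x ι) (y ι))) := by
  intro F hF
  obtain ⟨⟨hsub, hconv, hface⟩, hAF⟩ := hF
  set B := rankOne (prodVec (x j) (y j)) with hBdef
  set R := ∑ ι ∈ Finset.univ.erase j, rankOne (prodVec (x ι) (y ι)) with hRdef
  have hBsep : IsSep B := isSep_rankOne _ _
  have hRsep : IsSep R := isSep_sum_subset x y _
  have hsplit : (∑ ι : Fin n, rankOne (prodVec (x ι) (y ι))) = B + R := by
    rw [hBdef, hRdef]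
    exact (Finset.add_sum_erase Finset.univ _ (Finset.mem_univ j)).symm
  have h2B : ((2:ℝ) • B) ∈ F := by
    have hcomb : (1 - (1/2 : ℝ)) • ((2:ℝ) • B) + (1/2 : ℝ) • ((2:ℝ) • R) ∈ F := by
      have : (1 - (1/2 : ℝ)) • ((2:ℝ) • B) + (1/2 : ℝ) • ((2:ℝ) • R) = B + R := by
        rw [smul_smul, smul_smul]; norm_num
      rw [this, ← hsplit]; exact hAF
    exact (hface _ (hBsep.rsmul (by norm_num)) _ (hRsep.rsmul (by norm_num))
      (1/2) (by norm_num) (by norm_num) hcomb).1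
  have hcomb2 : (1 - (1/2 : ℝ)) • B + (1/2 : ℝ) • ((3:ℝ) • B) ∈ F := by
    have : (1 - (1/2 : ℝ)) • B + (1/2 : ℝ) • ((3:ℝ) • B) = (2:ℝ) • B := by
      rw [smul_smul, ← add_smul]; norm_num
    rw [this]; exact h2B
  exact (hface _ hBsep _ (hBsep.rsmul (by norm_num))
    (1/2) (by norm_num) (by norm_num) hcomb2).1

lemma mem_span_of_dotProduct (S : Set V9) (z : V9)
    (h : ∀ v : V9, (∀ u ∈ S, star u ⬝ᵥ v = 0) → star z ⬝ᵥ v = 0) :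
    z ∈ Submodule.span ℂ S := by
  set L : EuclideanSpace ℂ Idx ≃ₗ[ℂ] V9 := WithLp.linearEquiv 2 ℂ V9 with hL
  set K : Submodule ℂ (EuclideanSpace ℂ Idx) := Submodule.span ℂ (L.symm '' S) with hK
  have hinner : ∀ (a : V9) (u : EuclideanSpace ℂ Idx),
      (inner ℂ (L.symm a) u : ℂ) = star a ⬝ᵥ (WithLp.equiv 2 V9 u) := fun a u => by
        simp [hL, PiLp.inner_apply, dotProduct, mul_comm]
  have hmem : L.symm z ∈ Kᗮᗮ := by
    rw [Submodule.mem_orthogonal]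
    intro u hu
    have hu' : ∀ s ∈ S, star s ⬝ᵥ (WithLp.equiv 2 V9 u) = (0:ℂ) := by
      intro s hs
      rw [← hinner]
      exact (Submodule.mem_orthogonal K u).mp hu _
        (Submodule.subset_span ⟨s, hs, rfl⟩)
    have h1 : (inner ℂ (L.symm z) u : ℂ) = 0 := by
      rw [hinner]; exact h _ hu'
    rw [← inner_conj_symm, h1, map_zero]
  rw [Submodule.orthogonal_orthogonal] at hmem
  have : z ∈ Submodule.map (L : EuclideanSpace ℂ Idx →ₗ[ℂ] V9) K := ⟨L.symm z, hmem, by simp⟩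
  rw [hK, Submodule.map_span, Set.image_image] at this
  simpa using this

end AuxLemmas

/-- For separable `A`, `span P[A] = span Q[A] = range A`. -/
theorem stmt1 (A : M9) (hA : IsSep A) :
    Submodule.span ℂ (Pvecs A) = MatRange A ∧
    Submodule.span ℂ (Qvecs A) = MatRange A := by
  obtain ⟨n, x, y, rfl⟩ := hA
  set A := ∑ ι : Fin n, rankOne (prodVec (x ι) (y ι)) with hAdef
  have hAsep : IsSep A := ⟨n, x, y, hAdef⟩
  have hrange : MatRange A = Submodule.span ℂ (Set.range fun ι => prodVec (x ι) (y ι)) :=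
    matRange_sum_rankOne _
  -- the generators lie in `Pvecs A` and `Qvecs A`
  have hPgen : (Set.range fun ι => prodVec (x ι) (y ι)) ⊆ Pvecs A := by
    rintro z ⟨ι, rfl⟩
    exact ⟨⟨x ι, y ι, rfl⟩, rankOne_mem_smallestFace x y ι⟩
  have hQgen : (Set.range fun ι => prodVec (x ι) (y ι)) ⊆ Qvecs A := by
    rintro z ⟨ι, rfl⟩
    refine ⟨x ι, y ι, rfl, ?_, ?_⟩
    · rw [hrange]; exact Submodule.subset_span ⟨ι, rfl⟩
    · rw [hAdef, ptrans_sum_rankOne, matRange_sum_rankOne]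
      exact Submodule.subset_span ⟨ι, rfl⟩
  -- `Pvecs A ⊆ range A`
  have hPsub : Pvecs A ⊆ ↑(MatRange A) := by
    rintro z ⟨-, hzface⟩
    have hker : rankOne z ∈ Fker A :=
      hzface (Fker A) ⟨(Fker_isFace A hAsep).1, (Fker_isFace A hAsep).2⟩
    by_cases hz0 : z = 0
    · simp [hz0, Submodule.zero_mem]
    · obtain ⟨p, hp⟩ := Function.ne_iff.mp hz0
      rw [SetLike.mem_coe, hrange]
      refine mem_span_of_dotProduct _ _ fun w hw => ?_
      have hAw : A *ᵥ w = 0 := by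
        rw [hAdef, sum_mulVec']
        refine Finset.sum_eq_zero fun ι _ => ?_
        rw [rankOne_mulVec, hw _ ⟨ι, rfl⟩, zero_smul]
      have hzw := hker.2 w hAw
      rw [rankOne_mulVec] at hzw
      have := congrFun hzw p
      simp only [Pi.smul_apply, smul_eq_mul, Pi.zero_apply] at this
      exact (mul_eq_zero.mp this).resolve_right hp
  constructor
  · refine le_antisymm (Submodule.span_le.mpr hPsub) ?_
    rw [hrange]
    exact Submodule.span_mono hPgen
  · refine le_antisymm (Submodule.span_le.mpr ?_) ?_
    · rintro z ⟨x', y', rfl, hz1, -⟩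
      exact hz1
    · rw [hrange]
      exact Submodule.span_mono hQgen
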